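/- Let p be a prime, G a finite group, and H a normal subgroup of G whose order is coprime to p; let π : G → G/H be the quotient homomorphism. Let Q be a p-subgroup of G/H and let Q̃ = π⁻¹(Q) be its preimage in G. Then every p-subgroup P of G with π(P) = Q is a Sylow p-subgroup of Q̃; moreover, any two p-subgroups P₁, P₂ of G with π(P₁) = π(P₂) = Q are conjugate by an element of H. -/

import Mathlib

open Subgroup

private lemma mem_map_conj_iff {G : Type*} [Group G] (a x : G) (K : Subgroup G) :
    x ∈ K.map (MulAut.conj a).toMonoidHom ↔ a⁻¹ * x * a ∈ K := by
  rw [Subgroup.mem_map_equiv]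
  simp [MulAut.conj]

/-- Let `p` be a prime, `G` a finite group, `H ⊴ G` normal of order
coprime to `p`, `π : G → G/H` the quotient map, `Q` a `p`-subgroup of `G/H` and
`Q̃ = π⁻¹(Q)`.  Then every `p`-subgroup `P ≤ G` with `π(P) = Q` is a Sylow
`p`-subgroup of `Q̃` (i.e. `P ≤ Q̃` and the index of `P` in `Q̃` is coprime to `p`),
and any two such are conjugate by an element of `H`. -/
theorem stmt8 (p : ℕ) (hp : p.Prime) (G : Type*) [Group G] [Finite G]
    (H : Subgroup G) [H.Normal] (hcop : (Nat.card H).Coprime p)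
    (Q : Subgroup (G ⧸ H)) (hQ : IsPGroup p Q) :
    (∀ P : Subgroup G, IsPGroup p P →
      Subgroup.map (QuotientGroup.mk' H) P = Q →
      P ≤ Subgroup.comap (QuotientGroup.mk' H) Q ∧
      (P.relIndex (Subgroup.comap (QuotientGroup.mk' H) Q)).Coprime p) ∧
    ∀ P₁ P₂ : Subgroup G, IsPGroup p P₁ → IsPGroup p P₂ →
      Subgroup.map (QuotientGroup.mk' H) P₁ = Q →
      Subgroup.map (QuotientGroup.mk' H) P₂ = Q →
      ∃ h ∈ H, Subgroup.map (MulAut.conj h).toMonoidHom P₁ = P₂ := by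
  classical
  haveI : Fact p.Prime := ⟨hp⟩
  set π := QuotientGroup.mk' H with hπ
  have hker : π.ker = H := QuotientGroup.ker_mk' H
  set Qt := Subgroup.comap π Q with hQt
  have hHQt : H ≤ Qt := by
    rw [← hker]; exact Subgroup.ker_le_comap π Q
  -- general card fact
  have cardRel : ∀ {A B : Subgroup G}, A ≤ B →
      Nat.card A * A.relIndex B = Nat.card B := by
    intro A B hAB
    have h1 := Subgroup.card_mul_index (A.subgroupOf B)
    rwa [Nat.card_congr (Subgroup.subgroupOfEquivOfLe hAB).toEquiv] at h1
  -- card of Qt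
  have hrelH : H.relIndex Qt = Nat.card Q := by
    have h1 : π.ker.relIndex Qt = Nat.card (Subgroup.map π Qt) :=
      Subgroup.relIndex_ker (K := Qt) π
    rw [hker] at h1
    have h2 : Subgroup.map π Qt = Q :=
      Subgroup.map_comap_eq_self_of_surjective (QuotientGroup.mk'_surjective H) Q
    rw [h1, h2]
  have hcardQt : Nat.card Qt = Nat.card H * Nat.card Q := by
    rw [← cardRel hHQt, hrelH]
  -- main part 1, as a reusable claim
  have key : ∀ P : Subgroup G, IsPGroup p P →
      Subgroup.map π P = Q → P ≤ Qt ∧ P.relIndex Qt = Nat.card H := by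
    intro P hP hmap
    have hle : P ≤ Qt := by rw [hQt, ← hmap]; exact Subgroup.le_comap_map π P
    have hdisj : H ⊓ P = ⊥ := by
      obtain ⟨n, hn⟩ := (hP.to_inf_right (H := H)).exists_card_eq
      have hdvd : Nat.card ↥(H ⊓ P) ∣ Nat.card H :=
        Subgroup.card_dvd_of_le inf_le_left
      rw [hn] at hdvd
      have := (Nat.Coprime.pow_left n hcop.symm).eq_one_of_dvd hdvd
      rw [← Subgroup.card_eq_one, hn, this]
    have hcardP : Nat.card P = Nat.card Q := by
      have h1 : π.ker.relIndex P = Nat.card (Subgroup.map π P) :=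
        Subgroup.relIndex_ker (K := P) π
      rw [hker, hmap] at h1
      rw [← h1, ← Subgroup.inf_relIndex_right, hdisj, Subgroup.relIndex_bot_left]
    have hcard : Nat.card P * P.relIndex Qt = Nat.card H * Nat.card Q := by
      rw [cardRel hle, hcardQt]
    rw [hcardP] at hcard
    have hQne : Nat.card Q ≠ 0 := Nat.card_pos.ne'
    refine ⟨hle, ?_⟩
    rw [mul_comm (Nat.card H) _] at hcard
    exact Nat.eq_of_mul_eq_mul_left (Nat.pos_of_ne_zero hQne) hcard
  constructor
  · intro P hP hmap
    obtain ⟨hle, hrel⟩ := key P hP hmap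
    exact ⟨hle, hrel ▸ hcop⟩
  · intro P₁ P₂ hP₁ hP₂ hm₁ hm₂
    obtain ⟨hle₁, hrel₁⟩ := key P₁ hP₁ hm₁
    obtain ⟨hle₂, hrel₂⟩ := key P₂ hP₂ hm₂
    -- Sylow subgroups of Qt
    have hnd : ∀ {P : Subgroup G}, P.relIndex Qt = Nat.card H →
        ¬ p ∣ (P.subgroupOf Qt).index := by
      intro P hrel hdvd
      rw [Subgroup.relIndex] at hrel
      rw [hrel] at hdvd
      exact hp.one_lt.ne' (Nat.Coprime.eq_one_of_dvd hcop.symm hdvd)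
    let S₁ : Sylow p Qt := (hP₁.comap_subtype).toSylow (hnd hrel₁)
    let S₂ : Sylow p Qt := (hP₂.comap_subtype).toSylow (hnd hrel₂)
    obtain ⟨g, hg⟩ := MulAction.exists_smul_eq Qt S₁ S₂
    have hgs : ∀ z : Qt, z ∈ (S₂ : Subgroup Qt) ↔ g⁻¹ * z * g ∈ (S₁ : Subgroup Qt) := by
      intro z
      rw [← hg]
      rw [Sylow.smul_def, Sylow.pointwise_smul_def]
      rw [Subgroup.mem_pointwise_smul_iff_inv_smul_mem]
      rfl
    have hSmem : ∀ z : G, z ∈ P₂ ↔ (g : G)⁻¹ * z * (g : G) ∈ P₁ := by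
      intro z
      constructor
      · intro hz
        have hzQt : z ∈ Qt := hle₂ hz
        have : (⟨z, hzQt⟩ : Qt) ∈ (S₂ : Subgroup Qt) := hz
        exact (hgs ⟨z, hzQt⟩).mp this
      · intro hz
        have hzQt : z ∈ Qt := by
          have h1 : (g : G)⁻¹ * z * (g : G) ∈ Qt := hle₁ hz
          have := Qt.mul_mem (Qt.mul_mem g.2 h1) (Qt.inv_mem g.2)
          simpa [mul_assoc] using this
        have : g⁻¹ * (⟨z, hzQt⟩ : Qt) * g ∈ (S₁ : Subgroup Qt) := hz
        exact (hgs ⟨z, hzQt⟩).mpr this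
    -- find x ∈ P₁ with π x = π g
    have hgQ : π (g : G) ∈ Q := g.2
    rw [← hm₁] at hgQ
    obtain ⟨x, hxP, hx⟩ := hgQ
    refine ⟨(g : G) * x⁻¹, ?_, ?_⟩
    · rw [← hker, MonoidHom.mem_ker, map_mul, map_inv, hx, mul_inv_cancel]
    · ext z
      rw [mem_map_conj_iff]
      rw [hSmem z]
      constructor
      · intro h
        have heq : (g : G)⁻¹ * z * (g : G) =
            x⁻¹ * ((↑g * x⁻¹)⁻¹ * z * (↑g * x⁻¹)) * x := by group
        rw [heq]
        exact P₁.mul_mem (P₁.mul_mem (P₁.inv_mem hxP) h) hxP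
      · intro h
        have heq : (↑g * x⁻¹)⁻¹ * z * (↑g * x⁻¹) =
            x * ((g : G)⁻¹ * z * (g : G)) * x⁻¹ := by group
        rw [heq]
        exact P₁.mul_mem (P₁.mul_mem hxP h) (P₁.inv_mem hxP)
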